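/- arXiv:2103.02934 — 2 statements merged into one kernel-verified Lean document; each statement's English description precedes it below -/
import Mathlib

section
/- The hypersurface X in (ℙ¹)⁴ defined by u₁u₂u₃u₄ - v₁v₂v₃v₄ = 0 (where (uᵢ:vᵢ) are homogeneous coordinates on the i-th factor) has exactly 6 singular points, namely the points x_{p,q} indexed by 2-element subsets {p,q} ⊆ {1,2,3,4}, where uᵢ = 0 for i ∈ {p,q} and vᵢ = 0 for i ∉ {p,q}; moreover each singular point is an ordinary double point. -/
open MvPolynomial Matrix

/-- The multidegree `(1,1,1,1)` form `u₁u₂u₃u₄ - v₁v₂v₃v₄` on `(ℙ¹)⁴`, written in the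
8 homogeneous coordinates indexed by `Fin 4 ⊕ Fin 4` (`inl i ↦ uᵢ`, `inr i ↦ vᵢ`). -/
noncomputable def quadForm (k : Type*) [CommRing k] : MvPolynomial (Fin 4 ⊕ Fin 4) k :=
  (∏ i : Fin 4, X (Sum.inl i)) - ∏ i : Fin 4, X (Sum.inr i)

/-- `w` is a valid representative of a point of `(ℙ¹)⁴`: on each factor the two
homogeneous coordinates do not both vanish. -/
def IsRep {k : Type*} [CommRing k] (w : Fin 4 ⊕ Fin 4 → k) : Prop :=
  ∀ i : Fin 4, ¬ (w (Sum.inl i) = 0 ∧ w (Sum.inr i) = 0)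

section Aux

variable {k : Type*} [Field k]

theorem pd_l0 {k : Type*} [CommRing k] : pderiv (Sum.inl 0) (quadForm k) = X (Sum.inl 1) * X (Sum.inl 2) * X (Sum.inl 3) := by
  simp [quadForm, Fin.prod_univ_four, pderiv_mul, pderiv_X] <;> ring

theorem pd_l1 {k : Type*} [CommRing k] : pderiv (Sum.inl 1) (quadForm k) = X (Sum.inl 0) * X (Sum.inl 2) * X (Sum.inl 3) := by
  simp [quadForm, Fin.prod_univ_four, pderiv_mul, pderiv_X] <;> ring

theorem pd_l2 {k : Type*} [CommRing k] : pderiv (Sum.inl 2) (quadForm k) = X (Sum.inl 0) * X (Sum.inl 1) * X (Sum.inl 3) := by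
  simp [quadForm, Fin.prod_univ_four, pderiv_mul, pderiv_X] <;> ring

theorem pd_l3 {k : Type*} [CommRing k] : pderiv (Sum.inl 3) (quadForm k) = X (Sum.inl 0) * X (Sum.inl 1) * X (Sum.inl 2) := by
  simp [quadForm, Fin.prod_univ_four, pderiv_mul, pderiv_X] <;> ring

theorem pd_r0 {k : Type*} [CommRing k] : pderiv (Sum.inr 0) (quadForm k) = -(X (Sum.inr 1) * X (Sum.inr 2) * X (Sum.inr 3)) := by
  simp [quadForm, Fin.prod_univ_four, pderiv_mul, pderiv_X] <;> ring

theorem pd_r1 {k : Type*} [CommRing k] : pderiv (Sum.inr 1) (quadForm k) = -(X (Sum.inr 0) * X (Sum.inr 2) * X (Sum.inr 3)) := by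
  simp [quadForm, Fin.prod_univ_four, pderiv_mul, pderiv_X] <;> ring

theorem pd_r2 {k : Type*} [CommRing k] : pderiv (Sum.inr 2) (quadForm k) = -(X (Sum.inr 0) * X (Sum.inr 1) * X (Sum.inr 3)) := by
  simp [quadForm, Fin.prod_univ_four, pderiv_mul, pderiv_X] <;> ring

theorem pd_r3 {k : Type*} [CommRing k] : pderiv (Sum.inr 3) (quadForm k) = -(X (Sum.inr 0) * X (Sum.inr 1) * X (Sum.inr 2)) := by
  simp [quadForm, Fin.prod_univ_four, pderiv_mul, pderiv_X] <;> ring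

def blk (a : Fin 4 → k) : Matrix (Fin 4) (Fin 4) k :=
  !![0, a 2 * a 3, a 1 * a 3, a 1 * a 2;
     a 2 * a 3, 0, a 0 * a 3, a 0 * a 2;
     a 1 * a 3, a 0 * a 3, 0, a 0 * a 1;
     a 1 * a 2, a 0 * a 2, a 0 * a 1, 0]

set_option maxHeartbeats 2000000 in
theorem hessian_eq (w : Fin 4 ⊕ Fin 4 → k) :
    (Matrix.of fun j l : Fin 4 ⊕ Fin 4 => eval w (pderiv j (pderiv l (quadForm k))))
      = fromBlocks (blk (fun i => w (Sum.inl i))) 0 0 (-(blk (fun i => w (Sum.inr i)))) := by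
  ext j l
  rcases j with j | j <;> rcases l with l | l <;> fin_cases j <;> fin_cases l <;>
    simp [pd_l0, pd_l1, pd_l2, pd_l3, pd_r0, pd_r1, pd_r2, pd_r3,
      pderiv_mul, pderiv_X, blk] <;> ring

theorem rank_DP {n : Type*} [Fintype n] [DecidableEq n] (d : n → k) (σ : Equiv.Perm n)
    (s : Finset n) (hs : ∀ x, x ∈ s ↔ d x ≠ 0) :
    (Matrix.of fun j l => d j * (if l = σ j then 1 else 0) : Matrix n n k).rank = s.card := by
  classical
  have h : (Matrix.of fun j l => d j * (if l = σ j then 1 else 0) : Matrix n n k)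
      = Matrix.diagonal d * σ.permMatrix k := by
    ext j l
    rw [Matrix.mul_apply, Finset.sum_eq_single j]
    · simp [Equiv.Perm.permMatrix, PEquiv.toMatrix_apply, Equiv.toPEquiv, Matrix.diagonal, eq_comm]
    · intro x _ hx
      simp [Matrix.diagonal, hx.symm]
    · simp
  rw [h, Matrix.rank_mul_eq_left_of_isUnit_det _ _ (by
    rw [Matrix.det_permutation]; exact (Int.isUnit_iff.mp (Equiv.Perm.sign σ).isUnit).elim
      (fun h => by simp [h]) fun h => by simp [h]), Matrix.rank_diagonal,
    Fintype.card_of_subtype s hs]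

theorem two_of (a : Fin 4 → k) (h0 : a 1 * a 2 * a 3 = 0) (h1 : a 0 * a 2 * a 3 = 0)
    (h2 : a 0 * a 1 * a 3 = 0) (h3 : a 0 * a 1 * a 2 = 0) :
    ∃ p q : Fin 4, p ≠ q ∧ a p = 0 ∧ a q = 0 := by
  rcases mul_eq_zero.1 h0 with h | hz3
  · rcases mul_eq_zero.1 h with hz1 | hz2
    · rcases mul_eq_zero.1 h1 with h | hz3
      · rcases mul_eq_zero.1 h with hz0 | hz2
        · exact ⟨0, 1, by decide, hz0, hz1⟩
        · exact ⟨2, 1, by decide, hz2, hz1⟩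
      · exact ⟨3, 1, by decide, hz3, hz1⟩
    · rcases mul_eq_zero.1 h2 with h | hz3
      · rcases mul_eq_zero.1 h with hz0 | hz1
        · exact ⟨0, 2, by decide, hz0, hz2⟩
        · exact ⟨1, 2, by decide, hz1, hz2⟩
      · exact ⟨3, 2, by decide, hz3, hz2⟩
  · rcases mul_eq_zero.1 h3 with h | hz2
    · rcases mul_eq_zero.1 h with hz0 | hz1
      · exact ⟨0, 3, by decide, hz0, hz3⟩
      · exact ⟨1, 3, by decide, hz1, hz3⟩
    · exact ⟨2, 3, by decide, hz2, hz3⟩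

theorem key5 : ∀ p q t r s : Fin 4, ¬(p ≠ q ∧ t ≠ p ∧ t ≠ q ∧ r ≠ p ∧ r ≠ q ∧
    r ≠ t ∧ s ≠ p ∧ s ≠ q ∧ s ≠ t ∧ s ≠ r) := by decide

set_option maxHeartbeats 4000000 in
theorem rank_case0 (a b : Fin 4 → k) (p q : Fin 4) (hpq : p < q)
    (ha : ∀ i, a i = 0 ↔ i = p ∨ i = q) (hb : ∀ i, b i = 0 ↔ ¬(i = p ∨ i = q)) :
    (fromBlocks (blk a) 0 0 (-(blk b))).rank = 4 := by
  fin_cases p <;> fin_cases q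
  · exact absurd hpq (by decide)
  · have e1 : a 0 = 0 := (ha 0).2 (by decide)
    have e2 : a 1 = 0 := (ha 1).2 (by decide)
    have n1 : a 2 ≠ 0 := fun h => by simpa using (ha 2).1 h
    have n2 : a 3 ≠ 0 := fun h => by simpa using (ha 3).1 h
    have f1 : b 2 = 0 := (hb 2).2 (by decide)
    have f2 : b 3 = 0 := (hb 3).2 (by decide)
    have m1 : b 0 ≠ 0 := fun h => by simpa using (hb 0).1 h
    have m2 : b 1 ≠ 0 := fun h => by simpa using (hb 1).1 h
    have key : fromBlocks (blk a) 0 0 (-(blk b)) = Matrix.of fun j l =>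
        (Sum.elim (fun i : Fin 4 => if i = 0 ∨ i = 1 then a 2 * a 3 else 0)
                  (fun i : Fin 4 => if i = 2 ∨ i = 3 then -(b 0 * b 1) else 0) j) *
        (if l = (Equiv.sumCongr (Equiv.swap 0 1) (Equiv.swap 2 3) :
            Equiv.Perm (Fin 4 ⊕ Fin 4)) j then 1 else 0) := by
      ext j l
      rcases j with j | j <;> rcases l with l | l
      case' inl.inr => simp
      case' inr.inl => simp
      all_goals fin_cases j <;> fin_cases l <;>
        simp [blk, e1, e2, f1, f2, Equiv.swap_apply_def, Matrix.vecHead, Matrix.vecTail]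
    rw [key, rank_DP _ _ ({Sum.inl 0, Sum.inl 1, Sum.inr 2, Sum.inr 3} :
        Finset (Fin 4 ⊕ Fin 4))
      (by rintro (x | x) <;> fin_cases x <;> simp [mul_eq_zero, n1, n2, m1, m2])]
    decide
  · have e1 : a 0 = 0 := (ha 0).2 (by decide)
    have e2 : a 2 = 0 := (ha 2).2 (by decide)
    have n1 : a 1 ≠ 0 := fun h => by simpa using (ha 1).1 h
    have n2 : a 3 ≠ 0 := fun h => by simpa using (ha 3).1 h
    have f1 : b 1 = 0 := (hb 1).2 (by decide)
    have f2 : b 3 = 0 := (hb 3).2 (by decide)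
    have m1 : b 0 ≠ 0 := fun h => by simpa using (hb 0).1 h
    have m2 : b 2 ≠ 0 := fun h => by simpa using (hb 2).1 h
    have key : fromBlocks (blk a) 0 0 (-(blk b)) = Matrix.of fun j l =>
        (Sum.elim (fun i : Fin 4 => if i = 0 ∨ i = 2 then a 1 * a 3 else 0)
                  (fun i : Fin 4 => if i = 1 ∨ i = 3 then -(b 0 * b 2) else 0) j) *
        (if l = (Equiv.sumCongr (Equiv.swap 0 2) (Equiv.swap 1 3) :
            Equiv.Perm (Fin 4 ⊕ Fin 4)) j then 1 else 0) := by
      ext j l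
      rcases j with j | j <;> rcases l with l | l
      case' inl.inr => simp
      case' inr.inl => simp
      all_goals fin_cases j <;> fin_cases l <;>
        simp [blk, e1, e2, f1, f2, Equiv.swap_apply_def, Matrix.vecHead, Matrix.vecTail]
    rw [key, rank_DP _ _ ({Sum.inl 0, Sum.inl 2, Sum.inr 1, Sum.inr 3} :
        Finset (Fin 4 ⊕ Fin 4))
      (by rintro (x | x) <;> fin_cases x <;> simp [mul_eq_zero, n1, n2, m1, m2])]
    decide
  · have e1 : a 0 = 0 := (ha 0).2 (by decide)
    have e2 : a 3 = 0 := (ha 3).2 (by decide)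
    have n1 : a 1 ≠ 0 := fun h => by simpa using (ha 1).1 h
    have n2 : a 2 ≠ 0 := fun h => by simpa using (ha 2).1 h
    have f1 : b 1 = 0 := (hb 1).2 (by decide)
    have f2 : b 2 = 0 := (hb 2).2 (by decide)
    have m1 : b 0 ≠ 0 := fun h => by simpa using (hb 0).1 h
    have m2 : b 3 ≠ 0 := fun h => by simpa using (hb 3).1 h
    have key : fromBlocks (blk a) 0 0 (-(blk b)) = Matrix.of fun j l =>
        (Sum.elim (fun i : Fin 4 => if i = 0 ∨ i = 3 then a 1 * a 2 else 0)
                  (fun i : Fin 4 => if i = 1 ∨ i = 2 then -(b 0 * b 3) else 0) j) *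
        (if l = (Equiv.sumCongr (Equiv.swap 0 3) (Equiv.swap 1 2) :
            Equiv.Perm (Fin 4 ⊕ Fin 4)) j then 1 else 0) := by
      ext j l
      rcases j with j | j <;> rcases l with l | l
      case' inl.inr => simp
      case' inr.inl => simp
      all_goals fin_cases j <;> fin_cases l <;>
        simp [blk, e1, e2, f1, f2, Equiv.swap_apply_def, Matrix.vecHead, Matrix.vecTail]
    rw [key, rank_DP _ _ ({Sum.inl 0, Sum.inl 3, Sum.inr 1, Sum.inr 2} :
        Finset (Fin 4 ⊕ Fin 4))
      (by rintro (x | x) <;> fin_cases x <;> simp [mul_eq_zero, n1, n2, m1, m2])]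
    decide
  · exact absurd hpq (by decide)
  · exact absurd hpq (by decide)
  · have e1 : a 1 = 0 := (ha 1).2 (by decide)
    have e2 : a 2 = 0 := (ha 2).2 (by decide)
    have n1 : a 0 ≠ 0 := fun h => by simpa using (ha 0).1 h
    have n2 : a 3 ≠ 0 := fun h => by simpa using (ha 3).1 h
    have f1 : b 0 = 0 := (hb 0).2 (by decide)
    have f2 : b 3 = 0 := (hb 3).2 (by decide)
    have m1 : b 1 ≠ 0 := fun h => by simpa using (hb 1).1 h
    have m2 : b 2 ≠ 0 := fun h => by simpa using (hb 2).1 h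
    have key : fromBlocks (blk a) 0 0 (-(blk b)) = Matrix.of fun j l =>
        (Sum.elim (fun i : Fin 4 => if i = 1 ∨ i = 2 then a 0 * a 3 else 0)
                  (fun i : Fin 4 => if i = 0 ∨ i = 3 then -(b 1 * b 2) else 0) j) *
        (if l = (Equiv.sumCongr (Equiv.swap 1 2) (Equiv.swap 0 3) :
            Equiv.Perm (Fin 4 ⊕ Fin 4)) j then 1 else 0) := by
      ext j l
      rcases j with j | j <;> rcases l with l | l
      case' inl.inr => simp
      case' inr.inl => simp
      all_goals fin_cases j <;> fin_cases l <;>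
        simp [blk, e1, e2, f1, f2, Equiv.swap_apply_def, Matrix.vecHead, Matrix.vecTail]
    rw [key, rank_DP _ _ ({Sum.inl 1, Sum.inl 2, Sum.inr 0, Sum.inr 3} :
        Finset (Fin 4 ⊕ Fin 4))
      (by rintro (x | x) <;> fin_cases x <;> simp [mul_eq_zero, n1, n2, m1, m2])]
    decide
  · have e1 : a 1 = 0 := (ha 1).2 (by decide)
    have e2 : a 3 = 0 := (ha 3).2 (by decide)
    have n1 : a 0 ≠ 0 := fun h => by simpa using (ha 0).1 h
    have n2 : a 2 ≠ 0 := fun h => by simpa using (ha 2).1 h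
    have f1 : b 0 = 0 := (hb 0).2 (by decide)
    have f2 : b 2 = 0 := (hb 2).2 (by decide)
    have m1 : b 1 ≠ 0 := fun h => by simpa using (hb 1).1 h
    have m2 : b 3 ≠ 0 := fun h => by simpa using (hb 3).1 h
    have key : fromBlocks (blk a) 0 0 (-(blk b)) = Matrix.of fun j l =>
        (Sum.elim (fun i : Fin 4 => if i = 1 ∨ i = 3 then a 0 * a 2 else 0)
                  (fun i : Fin 4 => if i = 0 ∨ i = 2 then -(b 1 * b 3) else 0) j) *
        (if l = (Equiv.sumCongr (Equiv.swap 1 3) (Equiv.swap 0 2) :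
            Equiv.Perm (Fin 4 ⊕ Fin 4)) j then 1 else 0) := by
      ext j l
      rcases j with j | j <;> rcases l with l | l
      case' inl.inr => simp
      case' inr.inl => simp
      all_goals fin_cases j <;> fin_cases l <;>
        simp [blk, e1, e2, f1, f2, Equiv.swap_apply_def, Matrix.vecHead, Matrix.vecTail]
    rw [key, rank_DP _ _ ({Sum.inl 1, Sum.inl 3, Sum.inr 0, Sum.inr 2} :
        Finset (Fin 4 ⊕ Fin 4))
      (by rintro (x | x) <;> fin_cases x <;> simp [mul_eq_zero, n1, n2, m1, m2])]
    decide
  · exact absurd hpq (by decide)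
  · exact absurd hpq (by decide)
  · exact absurd hpq (by decide)
  · have e1 : a 2 = 0 := (ha 2).2 (by decide)
    have e2 : a 3 = 0 := (ha 3).2 (by decide)
    have n1 : a 0 ≠ 0 := fun h => by simpa using (ha 0).1 h
    have n2 : a 1 ≠ 0 := fun h => by simpa using (ha 1).1 h
    have f1 : b 0 = 0 := (hb 0).2 (by decide)
    have f2 : b 1 = 0 := (hb 1).2 (by decide)
    have m1 : b 2 ≠ 0 := fun h => by simpa using (hb 2).1 h
    have m2 : b 3 ≠ 0 := fun h => by simpa using (hb 3).1 h
    have key : fromBlocks (blk a) 0 0 (-(blk b)) = Matrix.of fun j l =>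
        (Sum.elim (fun i : Fin 4 => if i = 2 ∨ i = 3 then a 0 * a 1 else 0)
                  (fun i : Fin 4 => if i = 0 ∨ i = 1 then -(b 2 * b 3) else 0) j) *
        (if l = (Equiv.sumCongr (Equiv.swap 2 3) (Equiv.swap 0 1) :
            Equiv.Perm (Fin 4 ⊕ Fin 4)) j then 1 else 0) := by
      ext j l
      rcases j with j | j <;> rcases l with l | l
      case' inl.inr => simp
      case' inr.inl => simp
      all_goals fin_cases j <;> fin_cases l <;>
        simp [blk, e1, e2, f1, f2, Equiv.swap_apply_def, Matrix.vecHead, Matrix.vecTail]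
    rw [key, rank_DP _ _ ({Sum.inl 2, Sum.inl 3, Sum.inr 0, Sum.inr 1} :
        Finset (Fin 4 ⊕ Fin 4))
      (by rintro (x | x) <;> fin_cases x <;> simp [mul_eq_zero, n1, n2, m1, m2])]
    decide
  · exact absurd hpq (by decide)
  · exact absurd hpq (by decide)
  · exact absurd hpq (by decide)
  · exact absurd hpq (by decide)

theorem rank_case (a b : Fin 4 → k) (p q : Fin 4) (hpq : p ≠ q)
    (ha : ∀ i, a i = 0 ↔ i = p ∨ i = q) (hb : ∀ i, b i = 0 ↔ ¬(i = p ∨ i = q)) :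
    (fromBlocks (blk a) 0 0 (-(blk b))).rank = 4 := by
  rcases lt_or_gt_of_ne hpq with h | h
  · exact rank_case0 a b p q h ha hb
  · exact rank_case0 a b q p h (fun i => (ha i).trans or_comm)
      (fun i => (hb i).trans (not_congr or_comm))

set_option maxHeartbeats 4000000 in
theorem part1rev (w : Fin 4 ⊕ Fin 4 → k) (p q : Fin 4) (hpq : p < q)
    (ha : ∀ i, w (Sum.inl i) = 0 ↔ (i = p ∨ i = q))
    (hb : ∀ i, w (Sum.inr i) = 0 ↔ ¬ (i = p ∨ i = q)) :
    eval w (quadForm k) = 0 ∧ ∀ j, eval w (pderiv j (quadForm k)) = 0 := by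
  fin_cases p <;> fin_cases q
  · exact absurd hpq (by decide)
  · have e1 : w (Sum.inl 0) = 0 := (ha 0).2 (by decide)
    have e2 : w (Sum.inl 1) = 0 := (ha 1).2 (by decide)
    have f1 : w (Sum.inr 2) = 0 := (hb 2).2 (by decide)
    have f2 : w (Sum.inr 3) = 0 := (hb 3).2 (by decide)
    refine ⟨?_, ?_⟩
    · simp [quadForm, Fin.prod_univ_four, e1, e2, f1, f2]
    · rintro (j | j) <;> fin_cases j <;>
        simp [pd_l0, pd_l1, pd_l2, pd_l3, pd_r0, pd_r1, pd_r2, pd_r3, e1, e2, f1, f2]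
  · have e1 : w (Sum.inl 0) = 0 := (ha 0).2 (by decide)
    have e2 : w (Sum.inl 2) = 0 := (ha 2).2 (by decide)
    have f1 : w (Sum.inr 1) = 0 := (hb 1).2 (by decide)
    have f2 : w (Sum.inr 3) = 0 := (hb 3).2 (by decide)
    refine ⟨?_, ?_⟩
    · simp [quadForm, Fin.prod_univ_four, e1, e2, f1, f2]
    · rintro (j | j) <;> fin_cases j <;>
        simp [pd_l0, pd_l1, pd_l2, pd_l3, pd_r0, pd_r1, pd_r2, pd_r3, e1, e2, f1, f2]
  · have e1 : w (Sum.inl 0) = 0 := (ha 0).2 (by decide)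
    have e2 : w (Sum.inl 3) = 0 := (ha 3).2 (by decide)
    have f1 : w (Sum.inr 1) = 0 := (hb 1).2 (by decide)
    have f2 : w (Sum.inr 2) = 0 := (hb 2).2 (by decide)
    refine ⟨?_, ?_⟩
    · simp [quadForm, Fin.prod_univ_four, e1, e2, f1, f2]
    · rintro (j | j) <;> fin_cases j <;>
        simp [pd_l0, pd_l1, pd_l2, pd_l3, pd_r0, pd_r1, pd_r2, pd_r3, e1, e2, f1, f2]
  · exact absurd hpq (by decide)
  · exact absurd hpq (by decide)
  · have e1 : w (Sum.inl 1) = 0 := (ha 1).2 (by decide)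
    have e2 : w (Sum.inl 2) = 0 := (ha 2).2 (by decide)
    have f1 : w (Sum.inr 0) = 0 := (hb 0).2 (by decide)
    have f2 : w (Sum.inr 3) = 0 := (hb 3).2 (by decide)
    refine ⟨?_, ?_⟩
    · simp [quadForm, Fin.prod_univ_four, e1, e2, f1, f2]
    · rintro (j | j) <;> fin_cases j <;>
        simp [pd_l0, pd_l1, pd_l2, pd_l3, pd_r0, pd_r1, pd_r2, pd_r3, e1, e2, f1, f2]
  · have e1 : w (Sum.inl 1) = 0 := (ha 1).2 (by decide)
    have e2 : w (Sum.inl 3) = 0 := (ha 3).2 (by decide)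
    have f1 : w (Sum.inr 0) = 0 := (hb 0).2 (by decide)
    have f2 : w (Sum.inr 2) = 0 := (hb 2).2 (by decide)
    refine ⟨?_, ?_⟩
    · simp [quadForm, Fin.prod_univ_four, e1, e2, f1, f2]
    · rintro (j | j) <;> fin_cases j <;>
        simp [pd_l0, pd_l1, pd_l2, pd_l3, pd_r0, pd_r1, pd_r2, pd_r3, e1, e2, f1, f2]
  · exact absurd hpq (by decide)
  · exact absurd hpq (by decide)
  · exact absurd hpq (by decide)
  · have e1 : w (Sum.inl 2) = 0 := (ha 2).2 (by decide)
    have e2 : w (Sum.inl 3) = 0 := (ha 3).2 (by decide)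
    have f1 : w (Sum.inr 0) = 0 := (hb 0).2 (by decide)
    have f2 : w (Sum.inr 1) = 0 := (hb 1).2 (by decide)
    refine ⟨?_, ?_⟩
    · simp [quadForm, Fin.prod_univ_four, e1, e2, f1, f2]
    · rintro (j | j) <;> fin_cases j <;>
        simp [pd_l0, pd_l1, pd_l2, pd_l3, pd_r0, pd_r1, pd_r2, pd_r3, e1, e2, f1, f2]
  · exact absurd hpq (by decide)
  · exact absurd hpq (by decide)
  · exact absurd hpq (by decide)
  · exact absurd hpq (by decide)

theorem part1 (w : Fin 4 ⊕ Fin 4 → k) (hw : IsRep w) :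
    (eval w (quadForm k) = 0 ∧ ∀ j, eval w (pderiv j (quadForm k)) = 0) ↔
      ∃ p q : Fin 4, p ≠ q ∧
        (∀ i, w (Sum.inl i) = 0 ↔ (i = p ∨ i = q)) ∧
        (∀ i, w (Sum.inr i) = 0 ↔ ¬ (i = p ∨ i = q)) := by
  constructor
  · rintro ⟨-, hder⟩
    have h0 := hder (Sum.inl 0); have h1 := hder (Sum.inl 1)
    have h2 := hder (Sum.inl 2); have h3 := hder (Sum.inl 3)
    have g0 := hder (Sum.inr 0); have g1 := hder (Sum.inr 1)
    have g2 := hder (Sum.inr 2); have g3 := hder (Sum.inr 3)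
    simp only [pd_l0, pd_l1, pd_l2, pd_l3, pd_r0, pd_r1, pd_r2, pd_r3, _root_.map_mul, _root_.map_neg,
      eval_X, neg_eq_zero] at h0 h1 h2 h3 g0 g1 g2 g3
    obtain ⟨p, q, hpq, hap, haq⟩ := two_of (fun i => w (Sum.inl i)) h0 h1 h2 h3
    obtain ⟨r, s, hrs, hbr, hbs⟩ := two_of (fun i => w (Sum.inr i)) g0 g1 g2 g3
    have hd : ∀ i, w (Sum.inl i) = 0 → w (Sum.inr i) = 0 → False := fun i h h' => hw i ⟨h, h'⟩
    have hrp : r ≠ p := fun h => hd p hap (h ▸ hbr)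
    have hrq : r ≠ q := fun h => hd q haq (h ▸ hbr)
    have hsp : s ≠ p := fun h => hd p hap (h ▸ hbs)
    have hsq : s ≠ q := fun h => hd q haq (h ▸ hbs)
    refine ⟨p, q, hpq, fun i => ⟨fun hi => ?_, ?_⟩, fun i => ⟨fun hi => ?_, fun hni => ?_⟩⟩
    · by_contra hcon
      push_neg at hcon
      exact key5 p q i r s ⟨hpq, hcon.1, hcon.2, hrp, hrq, fun h => hd i hi (h ▸ hbr),
        hsp, hsq, fun h => hd i hi (h ▸ hbs), fun h => hrs h.symm⟩
    · rintro (rfl | rfl)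
      exacts [hap, haq]
    · rintro (rfl | rfl)
      exacts [hd _ hap hi, hd _ haq hi]
    · push_neg at hni
      by_cases hir : i = r
      · exact hir ▸ hbr
      · by_cases his : i = s
        · exact his ▸ hbs
        · exact (key5 p q i r s ⟨hpq, hni.1, hni.2, hrp, hrq, fun h => hir h.symm,
            hsp, hsq, fun h => his h.symm, fun h => hrs h.symm⟩).elim
  · rintro ⟨p, q, hpq, ha, hb⟩
    rcases lt_or_gt_of_ne hpq with h | h
    · exact part1rev w p q h ha hb
    · exact part1rev w q p h (fun i => (ha i).trans or_comm)
        (fun i => (hb i).trans (not_congr or_comm))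

theorem part2 (w : Fin 4 ⊕ Fin 4 → k) (hw : IsRep w)
    (hs : eval w (quadForm k) = 0 ∧ ∀ j, eval w (pderiv j (quadForm k)) = 0) :
    (Matrix.of fun j l : Fin 4 ⊕ Fin 4 =>
        eval w (pderiv j (pderiv l (quadForm k)))).rank = 4 := by
  obtain ⟨p, q, hpq, ha, hb⟩ := (part1 w hw).1 hs
  rw [hessian_eq]
  exact rank_case _ _ p q hpq ha hb

end Aux

/-- The hypersurface `X = {u₁u₂u₃u₄ = v₁v₂v₃v₄} ⊂ (ℙ¹)⁴` has exactly 6 singular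
points, namely the points `x_{p,q}` indexed by 2-element subsets `{p,q} ⊆ {1,2,3,4}`
where `uᵢ = 0` for `i ∈ {p,q}` and `vᵢ = 0` for `i ∉ {p,q}`; moreover each singular
point is an ordinary double point (the Hessian of the defining form at such a point
has rank 4, i.e. is nondegenerate transversally to the four scaling directions). -/
theorem stmt2 {k : Type*} [Field k] [IsAlgClosed k] [CharZero k] :
    (∀ w : Fin 4 ⊕ Fin 4 → k, IsRep w →
      ((eval w (quadForm k) = 0 ∧ ∀ j, eval w (pderiv j (quadForm k)) = 0) ↔
        ∃ p q : Fin 4, p ≠ q ∧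
          (∀ i, w (Sum.inl i) = 0 ↔ (i = p ∨ i = q)) ∧
          (∀ i, w (Sum.inr i) = 0 ↔ ¬ (i = p ∨ i = q)))) ∧
    (∀ w : Fin 4 ⊕ Fin 4 → k, IsRep w →
      (eval w (quadForm k) = 0 ∧ ∀ j, eval w (pderiv j (quadForm k)) = 0) →
      (Matrix.of fun j l : Fin 4 ⊕ Fin 4 =>
          eval w (pderiv j (pderiv l (quadForm k)))).rank = 4) := by
  exact ⟨fun w hw => part1 w hw, fun w hw hs => part2 w hw hs⟩
end

section
/- Let X ⊂ ℙ(V₁) × ℙ(V₂) (dim Vᵢ = 4, over an algebraically closed field of characteristic 0) be a smooth complete intersection of three divisors of bidegree (1,1) with equations spanning A ⊂ V₁* ⊗ V₂*. Then every bilinear form a ∈ A has rank ≥ 3: if some nonzero a ∈ A had rank ≤ 2, then X would be singular. -/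
open Module Matrix

lemma quad_root {k : Type*} [Field k] [IsAlgClosed k] (α β γ : k) :
    ∃ s t : k, ¬(s = 0 ∧ t = 0) ∧ α * s^2 + β * (s*t) + γ * t^2 = 0 := by
  by_cases hα : α = 0
  · exact ⟨1, 0, by simp, by simp [hα]⟩
  · obtain ⟨s, hs⟩ := IsAlgClosed.exists_root (Polynomial.C α * Polynomial.X^2 +
      Polynomial.C β * Polynomial.X + Polynomial.C γ) (by
        intro h
        have h1 : (Polynomial.C α * Polynomial.X^2 + Polynomial.C β * Polynomial.X +
            Polynomial.C γ).natDegree = 2 := by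
          compute_degree!
        have h2 := Polynomial.natDegree_eq_zero_iff_degree_le_zero.mpr h.le
        omega)
    refine ⟨s, 1, by simp, ?_⟩
    have := hs
    rw [Polynomial.IsRoot.def] at this
    simp at this
    linear_combination this

lemma core_pair {k : Type*} [Field k] [IsAlgClosed k] (B C : Matrix (Fin 2) (Fin 2) k) :
    ∃ x y : Fin 2 → k, x ≠ 0 ∧ y ≠ 0 ∧ x ⬝ᵥ B.mulVec y = 0 ∧ x ⬝ᵥ C.mulVec y = 0 := by
  obtain ⟨s, t, hst, hq⟩ := quad_root (B 0 0 * C 0 1 - B 0 1 * C 0 0)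
    (B 0 0 * C 1 1 + B 1 0 * C 0 1 - B 0 1 * C 1 0 - B 1 1 * C 0 0)
    (B 1 0 * C 1 1 - B 1 1 * C 1 0)
  set x : Fin 2 → k := ![s, t] with hx
  have hxne : x ≠ 0 := by
    intro h
    apply hst
    constructor
    · have := congrFun h 0; simpa [hx] using this
    · have := congrFun h 1; simpa [hx] using this
  set M : Matrix (Fin 2) (Fin 2) k := Matrix.of ![x ᵥ* B, x ᵥ* C] with hM
  have hdet : M.det = 0 := by
    rw [Matrix.det_fin_two]
    simp [hM, hx, Matrix.vecMul, dotProduct, Fin.sum_univ_two]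
    linear_combination hq
  obtain ⟨y, hyne, hy⟩ := (Matrix.exists_mulVec_eq_zero_iff).mpr hdet
  refine ⟨x, y, hxne, hyne, ?_, ?_⟩
  · rw [Matrix.dotProduct_mulVec]
    have := congrFun hy 0
    simpa [hM, Matrix.mulVec, dotProduct] using this
  · rw [Matrix.dotProduct_mulVec]
    have := congrFun hy 1
    simpa [hM, Matrix.mulVec, dotProduct] using this

set_option maxHeartbeats 1000000 in
/-- Let `X ⊂ ℙ(V₁) × ℙ(V₂)` (with `dim Vᵢ = 4`, over an algebraically closed field of
characteristic 0) be a complete intersection of three `(1,1)`-divisors with equations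
spanning a 3-dimensional space `A` of bilinear forms.  "Smooth" is taken in the sense
that there is no point `([v₁],[v₂]) ∈ X` together with a nonzero `a ∈ A` having `v₁`
in its left kernel and `v₂` in its right kernel.  If `X` is smooth in this sense then
every nonzero bilinear form `a ∈ A` has rank `≥ 3`. -/
theorem stmt12 {k V₁ V₂ : Type*} [Field k] [IsAlgClosed k] [CharZero k]
    [AddCommGroup V₁] [Module k V₁] [AddCommGroup V₂] [Module k V₂]
    [FiniteDimensional k V₁] [FiniteDimensional k V₂]
    (hV₁ : finrank k V₁ = 4) (hV₂ : finrank k V₂ = 4)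
    (A : Submodule k (V₁ →ₗ[k] V₂ →ₗ[k] k)) (hA : finrank k A = 3)
    (hsmooth : ¬ ∃ (v₁ : V₁) (v₂ : V₂) (a : V₁ →ₗ[k] V₂ →ₗ[k] k),
        v₁ ≠ 0 ∧ v₂ ≠ 0 ∧ a ∈ A ∧ a ≠ 0 ∧
        (∀ b ∈ A, b v₁ v₂ = 0) ∧ (∀ w, a v₁ w = 0) ∧ (∀ w, a w v₂ = 0)) :
    ∀ a ∈ A, a ≠ 0 → 3 ≤ finrank k (LinearMap.range a) := by
  intro a haA hane
  by_contra hr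
  push_neg at hr
  exfalso
  apply hsmooth
  -- left kernel has dimension ≥ 2
  have hrk := LinearMap.finrank_range_add_finrank_ker a
  rw [hV₁] at hrk
  have hker₁ : 2 ≤ finrank k (LinearMap.ker a) := by omega
  -- right kernel has dimension ≥ 2
  have hker₂ : 2 ≤ finrank k ((LinearMap.range a).dualCoannihilator) := by
    have h2 : finrank k (LinearMap.range a) +
        finrank k ((LinearMap.range a).dualCoannihilator) = 4 := by
      have := Subspace.finrank_add_finrank_dualCoannihilator_eq (LinearMap.range a)
      rw [hV₂] at this
      exact this
    omega
  -- linearly independent vectors in the kernels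
  obtain ⟨u', hu'⟩ := exists_linearIndependent_of_le_finrank (R := k)
    (M := LinearMap.ker a) hker₁
  obtain ⟨f', hf'⟩ := exists_linearIndependent_of_le_finrank (R := k)
    (M := (LinearMap.range a).dualCoannihilator) hker₂
  have hu : LinearIndependent k fun i => ((u' i : V₁)) :=
    hu'.map' (LinearMap.ker a).subtype (Submodule.ker_subtype _)
  have hf : LinearIndependent k fun i => ((f' i : V₂)) :=
    hf'.map' ((LinearMap.range a).dualCoannihilator).subtype (Submodule.ker_subtype _)
  set u : Fin 2 → V₁ := fun i => (u' i : V₁) with hud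
  set f : Fin 2 → V₂ := fun i => (f' i : V₂) with hfd
  have huker : ∀ p, a (u p) = 0 := fun p => (u' p).2
  have hfker : ∀ w q, a w (f q) = 0 := by
    intro w q
    have hq : (f q : V₂) ∈ (LinearMap.range a).dualCoannihilator := (f' q).2
    rw [Submodule.mem_dualCoannihilator] at hq
    exact hq (a w) (LinearMap.mem_range_self a w)
  -- a basis of A
  letI : AddCommGroup A := @Submodule.addCommGroup k (V₁ →ₗ[k] V₂ →ₗ[k] k) _ _ _ A
  haveI : Module.Free k A := Module.Free.of_divisionRing k A
  set g : Basis (Fin 3) k A := (finBasis k A).reindex (finCongr hA) with hg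
  set a' : A := ⟨a, haA⟩ with ha'
  set α : Fin 3 → k := fun i => g.repr a' i with hα
  have hsum : (a' : V₁ →ₗ[k] V₂ →ₗ[k] k) = ∑ i, α i • ((g i : A) : V₁ →ₗ[k] V₂ →ₗ[k] k) := by
    conv_lhs => rw [← g.sum_repr a']
    push_cast
    rfl
  have hane' : ∃ i₀, α i₀ ≠ 0 := by
    by_contra h
    push_neg at h
    apply hane
    have : (a' : V₁ →ₗ[k] V₂ →ₗ[k] k) = 0 := by
      rw [hsum]
      simp [h]
    simpa [ha'] using this
  obtain ⟨i₀, hi₀⟩ := hane'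
  -- the 2×2 restriction matrices
  set N : Fin 3 → Matrix (Fin 2) (Fin 2) k :=
    fun i => Matrix.of fun p q => ((g i : A) : V₁ →ₗ[k] V₂ →ₗ[k] k) (u p) (f q) with hN
  have hrel : ∀ p q, α 0 * N 0 p q + α 1 * N 1 p q + α 2 * N 2 p q = 0 := by
    intro p q
    have : a (u p) (f q) = ∑ i, α i * ((g i : A) : V₁ →ₗ[k] V₂ →ₗ[k] k) (u p) (f q) := by
      have h1 : a = (a' : V₁ →ₗ[k] V₂ →ₗ[k] k) := rfl
      rw [h1, hsum]
      simp [LinearMap.sum_apply, LinearMap.smul_apply, smul_eq_mul]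
    rw [huker p] at this
    simp only [LinearMap.zero_apply] at this
    rw [Fin.sum_univ_three] at this
    simp only [hN, Matrix.of_apply]
    linear_combination -this
  -- find the common zero
  have key : ∃ x y : Fin 2 → k, x ≠ 0 ∧ y ≠ 0 ∧ ∀ i, x ⬝ᵥ (N i).mulVec y = 0 := by
    have hlin : ∀ x y : Fin 2 → k,
        α 0 * (x ⬝ᵥ (N 0).mulVec y) + α 1 * (x ⬝ᵥ (N 1).mulVec y)
          + α 2 * (x ⬝ᵥ (N 2).mulVec y) = 0 := by
      intro x y
      simp only [dotProduct, Matrix.mulVec, Fin.sum_univ_two]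
      linear_combination (x 0 * y 0) * hrel 0 0 + (x 0 * y 1) * hrel 0 1 +
        (x 1 * y 0) * hrel 1 0 + (x 1 * y 1) * hrel 1 1
    fin_cases i₀
    · obtain ⟨x, y, hx, hy, h1, h2⟩ := core_pair (N 1) (N 2)
      refine ⟨x, y, hx, hy, ?_⟩
      intro i
      fin_cases i
      · have hth := hlin x y
        rw [h1, h2] at hth
        have h0 : α 0 * (x ⬝ᵥ (N 0).mulVec y) = 0 := by linear_combination hth
        exact (mul_eq_zero.mp h0).resolve_left hi₀
      · exact h1
      · exact h2
    · obtain ⟨x, y, hx, hy, h1, h2⟩ := core_pair (N 0) (N 2)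
      refine ⟨x, y, hx, hy, ?_⟩
      intro i
      fin_cases i
      · exact h1
      · have hth := hlin x y
        rw [h1, h2] at hth
        have h0 : α 1 * (x ⬝ᵥ (N 1).mulVec y) = 0 := by linear_combination hth
        exact (mul_eq_zero.mp h0).resolve_left hi₀
      · exact h2
    · obtain ⟨x, y, hx, hy, h1, h2⟩ := core_pair (N 0) (N 1)
      refine ⟨x, y, hx, hy, ?_⟩
      intro i
      fin_cases i
      · exact h1
      · exact h2
      · have hth := hlin x y
        rw [h1, h2] at hth
        have h0 : α 2 * (x ⬝ᵥ (N 2).mulVec y) = 0 := by linear_combination hth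
        exact (mul_eq_zero.mp h0).resolve_left hi₀
  obtain ⟨x, y, hxne, hyne, hkill⟩ := key
  set v₁ : V₁ := x 0 • u 0 + x 1 • u 1 with hv₁
  set v₂ : V₂ := y 0 • f 0 + y 1 • f 1 with hv₂
  have hv₁ker : a v₁ = 0 := by
    simp [hv₁, map_add, _root_.map_smul, huker 0, huker 1]
  have hv₂ker : ∀ w, a w v₂ = 0 := by
    intro w
    simp [hv₂, map_add, _root_.map_smul, hfker w 0, hfker w 1]
  have hv₁ne : v₁ ≠ 0 := by
    intro h
    apply hxne
    have := Fintype.linearIndependent_iff.mp hu x (by rw [Fin.sum_univ_two]; exact h)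
    funext i
    exact this i
  have hv₂ne : v₂ ≠ 0 := by
    intro h
    apply hyne
    have := Fintype.linearIndependent_iff.mp hf y (by rw [Fin.sum_univ_two]; exact h)
    funext i
    exact this i
  -- each basis element vanishes at (v₁, v₂)
  have hgval : ∀ i, ((g i : A) : V₁ →ₗ[k] V₂ →ₗ[k] k) v₁ v₂ = 0 := by
    intro i
    have heq : ((g i : A) : V₁ →ₗ[k] V₂ →ₗ[k] k) v₁ v₂ = x ⬝ᵥ (N i).mulVec y := by
      simp only [hv₁, hv₂, map_add, _root_.map_smul, LinearMap.add_apply,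
        LinearMap.smul_apply, smul_eq_mul, dotProduct, Matrix.mulVec,
        Fin.sum_univ_two, hN, Matrix.of_apply]
      ring
    rw [heq, hkill i]
  refine ⟨v₁, v₂, a, hv₁ne, hv₂ne, haA, hane, ?_, ?_, hv₂ker⟩
  · intro b hb
    have hbsum : b = ∑ i, g.repr ⟨b, hb⟩ i • ((g i : A) : V₁ →ₗ[k] V₂ →ₗ[k] k) := by
      conv_lhs => rw [show b = ((⟨b, hb⟩ : A) : V₁ →ₗ[k] V₂ →ₗ[k] k) from rfl,
        ← g.sum_repr ⟨b, hb⟩]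
      push_cast
      rfl
    rw [hbsum]
    simp [LinearMap.sum_apply, LinearMap.smul_apply, smul_eq_mul, hgval]
  · intro w
    rw [hv₁ker]
    rfl
end
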